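/- Let d ≥ 0 and let G be a connected locally finite (2d+1)-regular simple graph on vertex set V. If G is bipartite, then there exist permutations σ₁, …, σ_d of V and a fixed-point-free involution τ of V such that for every vertex x the 2d+1 vertices σ₁(x), σ₁⁻¹(x), …, σ_d(x), σ_d⁻¹(x), τ(x) are pairwise distinct and their set is exactly the neighborhood of x in G. If G is not bipartite, then the same conclusion holds for the canonical double cover G ⊗ K₂ on the vertex set V × Bool. (Equivalently: either G, if it is bipartite, or G ⊗ K₂, otherwise, is isomorphic to a Schreier graph of F_d ∗ (ℤ/2ℤ).) -/

import Mathlib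

/-- The canonical double cover `G ⊗ K₂` of a simple graph `G`: vertices are `V × Bool`,
and `(v, b)` is adjacent to `(w, c)` iff `v` is adjacent to `w` in `G` and `b ≠ c`. -/
def doubleCover {V : Type*} (G : SimpleGraph V) : SimpleGraph (V × Bool) where
  Adj x y := G.Adj x.1 y.1 ∧ x.2 ≠ y.2
  symm := ⟨fun _ _ h => ⟨G.symm.symm _ _ h.1, Ne.symm h.2⟩⟩
  loopless := ⟨fun _ h => h.2 rfl⟩

/-- A graph `H` carries permutations `σ₁, …, σ_d` and a fixed-point-free involution `τ` of its
vertex set such that for every vertex `x` the `2d+1` vertices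
`σ₁ x, σ₁⁻¹ x, …, σ_d x, σ_d⁻¹ x, τ x` are pairwise distinct and form exactly the
neighborhood of `x`.  (This encodes being a Schreier graph of `F_d ∗ (ℤ/2ℤ)`.) -/
def FreeProductStructure {W : Type*} (H : SimpleGraph W) (d : ℕ) : Prop :=
  ∃ (σ : Fin d → Equiv.Perm W) (τ : Equiv.Perm W),
    (∀ x, τ (τ x) = x) ∧ (∀ x, τ x ≠ x) ∧
    ∀ x : W,
      Function.Injective
        (Sum.elim (Sum.elim (fun i : Fin d => σ i x) (fun i : Fin d => (σ i)⁻¹ x))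
          (fun _ : Fin 1 => τ x)) ∧
      Set.range
        (Sum.elim (Sum.elim (fun i : Fin d => σ i x) (fun i : Fin d => (σ i)⁻¹ x))
          (fun _ : Fin 1 => τ x)) = H.neighborSet x

private lemma sb_exists {α β : Type*} {f : α → β} {g : β → α}
    (hf : Function.Injective f) (hg : Function.Injective g) :
    ∃ h : α → β, Function.Bijective h ∧ ∀ a, h a = f a ∨ g (h a) = a := by
  classical
  let F : Set α →o Set α :=
    ⟨fun S => (g '' (f '' S)ᶜ)ᶜ, by
      intro S T hST
      exact Set.compl_subset_compl.mpr
        (Set.image_mono (Set.compl_subset_compl.mpr (Set.image_mono hST)))⟩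
  set S := OrderHom.lfp F with hSdef
  have hS : (g '' (f '' S)ᶜ)ᶜ = S := OrderHom.map_lfp F
  have hSc : Sᶜ = g '' (f '' S)ᶜ := by conv_lhs => rw [← hS, compl_compl]
  have hchoice : ∀ a, a ∉ S → ∃ b, b ∉ f '' S ∧ g b = a := by
    intro a ha
    have : a ∈ g '' (f '' S)ᶜ := hSc ▸ ha
    obtain ⟨b, hb, hgb⟩ := this
    exact ⟨b, hb, hgb⟩
  choose b hb1 hb2 using hchoice
  refine ⟨fun a => if ha : a ∈ S then f a else b a ha, ⟨?_, ?_⟩, ?_⟩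
  · intro a₁ a₂ h
    by_cases h1 : a₁ ∈ S <;> by_cases h2 : a₂ ∈ S <;>
      simp only [h1, h2, dite_true, dite_false] at h
    · exact hf h
    · exact absurd ⟨a₁, h1, h⟩ (hb1 a₂ h2)
    · exact absurd ⟨a₂, h2, h.symm⟩ (hb1 a₁ h1)
    · rw [← hb2 a₁ h1, ← hb2 a₂ h2, h]
  · intro y
    by_cases hy : y ∈ f '' S
    · obtain ⟨a, ha, rfl⟩ := hy
      exact ⟨a, dif_pos ha⟩
    · have hgy : g y ∉ S := by
        rw [← hS]
        simp only [Set.mem_compl_iff, not_not]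
        exact ⟨y, hy, rfl⟩
      refine ⟨g y, ?_⟩
      simp only [dif_neg hgy]
      exact hg (hb2 (g y) hgy)
  · intro a
    by_cases ha : a ∈ S
    · exact Or.inl (dif_pos ha)
    · right; simp only [dif_neg ha]; exact hb2 a ha

private lemma hall_side {W : Type*} (H : SimpleGraph W)
    (hfin : ∀ x, (H.neighborSet x).Finite) (k : ℕ)
    (hdeg : ∀ x, (hfin x).toFinset.card = k + 1)
    (c : W → Bool) (hc : ∀ x y, H.Adj x y → c x ≠ c y) (bb : Bool) :
    ∃ f : {x // c x = bb} → {x // c x = !bb},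
      Function.Injective f ∧ ∀ a, H.Adj a.1 (f a).1 := by
  classical
  set t : {x // c x = bb} → Finset W := fun a => (hfin a.1).toFinset with ht
  have hmem : ∀ (a : {x // c x = bb}) (y : W), y ∈ t a ↔ H.Adj a.1 y := by
    intro a y
    simp [ht, Set.Finite.mem_toFinset]
  have hall : ∀ s : Finset {x // c x = bb}, s.card ≤ (s.biUnion t).card := by
    intro s
    set B := s.biUnion t with hB
    have key : (k + 1) * s.card ≤ (k + 1) * B.card := by
      calc (k + 1) * s.card = ∑ a ∈ s, (t a).card := by
              rw [Finset.sum_congr rfl fun a _ => hdeg a.1, Finset.sum_const, smul_eq_mul,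
                mul_comm]
        _ = ∑ a ∈ s, (B.filter (· ∈ t a)).card := by
              refine Finset.sum_congr rfl fun a ha => ?_
              have : B.filter (· ∈ t a) = t a := by
                rw [Finset.filter_mem_eq_inter, Finset.inter_eq_right]
                exact Finset.subset_biUnion_of_mem t ha
              rw [this]
        _ = ∑ a ∈ s, ∑ y ∈ B, if y ∈ t a then 1 else 0 := by
              refine Finset.sum_congr rfl fun a _ => ?_
              rw [Finset.card_filter]
        _ = ∑ y ∈ B, (s.filter (fun a => y ∈ t a)).card := by
              rw [Finset.sum_comm]
              refine Finset.sum_congr rfl fun y _ => ?_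
              rw [Finset.card_filter]
        _ ≤ ∑ y ∈ B, (k + 1) := by
              refine Finset.sum_le_sum fun y _ => ?_
              rw [← hdeg y]
              refine Finset.card_le_card_of_injOn (fun a => a.1) ?_ ?_
              · intro a ha
                rw [Finset.mem_coe, Finset.mem_filter] at ha
                rw [Finset.mem_coe, Set.Finite.mem_toFinset]
                exact ((hmem a y).mp ha.2).symm
              · intro a _ a' _ h
                exact Subtype.ext h
        _ = B.card * (k + 1) := by rw [Finset.sum_const, smul_eq_mul]
        _ = (k + 1) * B.card := mul_comm _ _
    exact Nat.le_of_mul_le_mul_left key (Nat.succ_pos k)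
  obtain ⟨f0, hf0inj, hf0mem⟩ := (Finset.all_card_le_biUnion_card_iff_exists_injective t).mp hall
  have hadj : ∀ a, H.Adj a.1 (f0 a) := fun a => (hmem a (f0 a)).mp (hf0mem a)
  have hcol : ∀ a, c (f0 a) = !bb := by
    intro a
    have h1 := hc a.1 (f0 a) (hadj a)
    rw [a.2] at h1
    cases hb : c (f0 a) <;> cases bb <;> simp_all
  refine ⟨fun a => ⟨f0 a, hcol a⟩, ?_, ?_⟩
  · intro a a' h
    exact hf0inj (congrArg Subtype.val h)
  · intro a
    exact hadj a

private lemma exists_matching {W : Type*} (H : SimpleGraph W)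
    (hfin : ∀ x, (H.neighborSet x).Finite) (k : ℕ)
    (hdeg : ∀ x, (hfin x).toFinset.card = k + 1)
    (c : W → Bool) (hc : ∀ x y, H.Adj x y → c x ≠ c y) :
    ∃ τ : W → W, (∀ x, H.Adj x (τ x)) ∧ ∀ x, τ (τ x) = x := by
  classical
  obtain ⟨f, hfinj, hfadj⟩ := hall_side H hfin k hdeg c hc true
  obtain ⟨g0, hg0inj, hg0adj⟩ := hall_side H hfin k hdeg c hc false
  -- adjust types
  let g : {x // c x = !true} → {x // c x = true} :=
    fun x => ⟨(g0 ⟨x.1, by simpa using x.2⟩).1, (g0 ⟨x.1, by simpa using x.2⟩).2⟩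
  have hginj : Function.Injective g := by
    intro a a' h
    have := hg0inj (Subtype.ext (congrArg Subtype.val h))
    have := congrArg Subtype.val this
    exact Subtype.ext this
  have hgadj : ∀ a, H.Adj a.1 (g a).1 := fun a => hg0adj ⟨a.1, by simpa using a.2⟩
  obtain ⟨h, hbij, hprop⟩ := sb_exists hfinj hginj
  have hadj : ∀ a, H.Adj a.1 (h a).1 := by
    intro a
    rcases hprop a with h1 | h1
    · rw [h1]; exact hfadj a
    · have := hgadj (h a)
      rw [h1] at this
      exact this.symm
  let e := Equiv.ofBijective h hbij
  refine ⟨fun x => if hx : c x = true then (h ⟨x, hx⟩).1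
    else (e.symm ⟨x, by simp [Bool.not_eq_true] at hx ⊢; exact hx⟩).1, ?_, ?_⟩
  · intro x
    by_cases hx : c x = true
    · simp only [dif_pos hx]
      exact hadj ⟨x, hx⟩
    · simp only [dif_neg hx]
      set a := e.symm ⟨x, by simp [Bool.not_eq_true] at hx ⊢; exact hx⟩ with ha
      have : h a = ⟨x, _⟩ := e.apply_symm_apply _
      have h2 := hadj a
      rw [this] at h2
      exact h2.symm
  · intro x
    by_cases hx : c x = true
    · simp only [dif_pos hx]
      have hcy : ¬ (c (h ⟨x, hx⟩).1 = true) := by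
        have := (h ⟨x, hx⟩).2
        simp [this]
      simp only [dif_neg hcy]
      have : (⟨(h ⟨x, hx⟩).1, _⟩ : {y // c y = !true}) = h ⟨x, hx⟩ := Subtype.ext rfl
      rw [this]
      have : e.symm (h ⟨x, hx⟩) = ⟨x, hx⟩ := e.symm_apply_apply _
      rw [show e.symm (h ⟨x, hx⟩) = ⟨x, hx⟩ from e.symm_apply_apply _]
    · simp only [dif_neg hx]
      set a := e.symm ⟨x, by simp [Bool.not_eq_true] at hx ⊢; exact hx⟩ with ha
      have hca : c a.1 = true := a.2
      simp only [← ha]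
      simp only [dif_pos hca]
      have : (⟨a.1, hca⟩ : {y // c y = true}) = a := Subtype.ext rfl
      rw [this]
      have : h a = ⟨x, _⟩ := e.apply_symm_apply _
      rw [this]
private lemma decomp {W : Type*} : ∀ (k : ℕ) (H : SimpleGraph W)
    (hfin : ∀ x, (H.neighborSet x).Finite),
    (∀ x, (hfin x).toFinset.card = k) →
    ∀ (c : W → Bool), (∀ x y, H.Adj x y → c x ≠ c y) →
    ∃ f : Fin k → W → W, (∀ i x, H.Adj x (f i x)) ∧ (∀ i x, f i (f i x) = x) ∧
      (∀ x, Function.Injective fun i => f i x)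
  | 0, H, hfin, hdeg, c, hc =>
      ⟨fun i => i.elim0, fun i => i.elim0, fun i => i.elim0, fun x i => i.elim0⟩
  | (k+1), H, hfin, hdeg, c, hc => by
    classical
    obtain ⟨τ, hτadj, hτinv⟩ := exists_matching H hfin k hdeg c hc
    set H' : SimpleGraph W :=
      { Adj := fun x y => H.Adj x y ∧ τ x ≠ y ∧ τ y ≠ x
        symm := by
          constructor
          intro x y hxy
          exact ⟨hxy.1.symm, hxy.2.2, hxy.2.1⟩
        loopless := ⟨fun x hx => H.loopless.irrefl x hx.1⟩ } with hH'
    have hadj' : ∀ x y, H'.Adj x y ↔ H.Adj x y ∧ τ x ≠ y ∧ τ y ≠ x := fun x y => Iff.rfl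
    have hN : ∀ x, H'.neighborSet x = H.neighborSet x \ {τ x} := by
      intro x
      ext y
      simp only [SimpleGraph.mem_neighborSet, hadj', Set.mem_diff, Set.mem_singleton_iff]
      constructor
      · rintro ⟨h1, h2, h3⟩
        exact ⟨h1, fun e => h2 e.symm⟩
      · rintro ⟨h1, h2⟩
        refine ⟨h1, fun e => h2 e.symm, fun e => h2 ?_⟩
        rw [← e, hτinv]
    have hfin' : ∀ x, (H'.neighborSet x).Finite := by
      intro x
      rw [hN x]
      exact (hfin x).diff
    have hT : ∀ x, (hfin' x).toFinset = (hfin x).toFinset.erase (τ x) := by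
      intro x
      ext y
      simp only [Set.Finite.mem_toFinset, Finset.mem_erase, Set.Finite.mem_toFinset, hN x,
        Set.mem_diff, Set.mem_singleton_iff]
      tauto
    have hdeg' : ∀ x, (hfin' x).toFinset.card = k := by
      intro x
      rw [hT x, Finset.card_erase_of_mem
        (by rw [Set.Finite.mem_toFinset]; exact hτadj x), hdeg x]
      omega
    obtain ⟨f', h1, h2, h3⟩ := decomp k H' hfin' hdeg' c (fun x y hxy => hc x y hxy.1)
    refine ⟨Fin.cases τ f', ?_, ?_, ?_⟩
    · intro i x
      induction i using Fin.cases with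
      | zero => simpa using hτadj x
      | succ i => simpa using (h1 i x).1
    · intro i x
      induction i using Fin.cases with
      | zero => simpa using hτinv x
      | succ i => simpa using h2 i x
    · intro x i j hij
      induction i using Fin.cases with
      | zero =>
        induction j using Fin.cases with
        | zero => rfl
        | succ j =>
          simp only [Fin.cases_zero, Fin.cases_succ] at hij
          exact absurd hij (h1 j x).2.1
      | succ i =>
        induction j using Fin.cases with
        | zero =>
          simp only [Fin.cases_zero, Fin.cases_succ] at hij
          exact absurd hij.symm (h1 i x).2.1
        | succ j =>
          simp only [Fin.cases_succ] at hij
          exact congrArg Fin.succ (h3 x hij)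
private lemma buildStructure {W : Type*} (H : SimpleGraph W) (d : ℕ)
    (hfin : ∀ x, (H.neighborSet x).Finite)
    (hdeg : ∀ x, (hfin x).toFinset.card = 2 * d + 1)
    (c : W → Bool) (hc : ∀ x y, H.Adj x y → c x ≠ c y) :
    FreeProductStructure H d := by
  classical
  obtain ⟨f, hfa, hfi, hfj⟩ := decomp (2 * d + 1) H hfin hdeg c hc
  have himg : ∀ x, (Finset.univ.image (fun i => f i x)) = (hfin x).toFinset := by
    intro x
    apply Finset.eq_of_subset_of_card_le
    · intro y hy
      simp only [Finset.mem_image, Finset.mem_univ, true_and] at hy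
      obtain ⟨i, rfl⟩ := hy
      rw [Set.Finite.mem_toFinset]
      exact hfa i x
    · rw [hdeg x, Finset.card_image_of_injective _ (hfj x), Finset.card_univ, Fintype.card_fin]
  have hrange : ∀ x, Set.range (fun j => f j x) = H.neighborSet x := by
    intro x
    ext y
    constructor
    · rintro ⟨i, rfl⟩
      exact hfa i x
    · intro hy
      have h2 : y ∈ (hfin x).toFinset := (Set.Finite.mem_toFinset _).mpr hy
      rw [← himg x] at h2
      simp only [Finset.mem_image, Finset.mem_univ, true_and] at h2
      exact h2
  have hflip : ∀ (i : Fin (2 * d + 1)) x, c (f i x) = !(c x) := by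
    intro i x
    have h1 := hc x (f i x) (hfa i x)
    cases hb : c (f i x) <;> cases hcx : c x <;> simp_all
  set z : Fin (2 * d + 1) := ⟨0, by omega⟩ with hz
  set aIdx : Fin d → Fin (2 * d + 1) := fun i => ⟨2 * i.1 + 1, by omega⟩ with haIdx
  set bIdx : Fin d → Fin (2 * d + 1) := fun i => ⟨2 * i.1 + 2, by omega⟩ with hbIdx
  set σ : Fin d → Equiv.Perm W := fun i =>
    { toFun := fun x => if c x = true then f (aIdx i) x else f (bIdx i) x
      invFun := fun x => if c x = true then f (bIdx i) x else f (aIdx i) x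
      left_inv := by
        intro x
        by_cases hx : c x = true
        · simp only [if_pos hx]
          have h2 : ¬ (c (f (aIdx i) x) = true) := by rw [hflip, hx]; simp
          rw [if_neg h2]
          exact hfi _ x
        · simp only [if_neg hx]
          have hx' : c x = false := by simpa using hx
          have h2 : c (f (bIdx i) x) = true := by rw [hflip, hx']; simp
          rw [if_pos h2]
          exact hfi _ x
      right_inv := by
        intro x
        by_cases hx : c x = true
        · simp only [if_pos hx]
          have h2 : ¬ (c (f (bIdx i) x) = true) := by rw [hflip, hx]; simp
          rw [if_neg h2]
          exact hfi _ x
        · simp only [if_neg hx]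
          have hx' : c x = false := by simpa using hx
          have h2 : c (f (aIdx i) x) = true := by rw [hflip, hx']; simp
          rw [if_pos h2]
          exact hfi _ x } with hσ
  refine ⟨σ, ⟨fun x => f z x, fun x => f z x, fun x => hfi z x, fun x => hfi z x⟩,
    fun x => hfi z x, fun x => (hfa z x).ne', fun x => ?_⟩
  set ι : (Fin d ⊕ Fin d) ⊕ Fin 1 → Fin (2 * d + 1) :=
    Sum.elim (Sum.elim (fun i => if c x = true then aIdx i else bIdx i)
      (fun i => if c x = true then bIdx i else aIdx i)) (fun _ => z) with hι
  have hfam : (Sum.elim (Sum.elim (fun i : Fin d => σ i x) (fun i : Fin d => (σ i)⁻¹ x))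
      (fun _ : Fin 1 => (⟨fun x => f z x, fun x => f z x, fun x => hfi z x,
        fun x => hfi z x⟩ : Equiv.Perm W) x)) = (fun j => f j x) ∘ ι := by
    funext u
    rcases u with (i | i) | i
    · show σ i x = f (if c x = true then aIdx i else bIdx i) x
      by_cases hx : c x = true <;> simp [hσ, hx]
    · show (σ i)⁻¹ x = f (if c x = true then bIdx i else aIdx i) x
      by_cases hx : c x = true <;>
        simp [hσ, Equiv.Perm.inv_def, Equiv.symm, hx]
    · rfl
  have hιinj : Function.Injective ι := by
    by_cases hx : c x = true <;>
      rintro ((i | i) | i) ((j | j) | j) huv <;>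
      simp [hι, haIdx, hbIdx, hz, Fin.ext_iff, hx] at huv ⊢ <;>
      omega
  have hιbij : Function.Bijective ι := by
    rw [Fintype.bijective_iff_injective_and_card]
    refine ⟨hιinj, by simp; omega⟩
  constructor
  · rw [hfam]
    exact (hfj x).comp hιinj
  · rw [hfam, Set.range_comp, Set.range_eq_univ.mpr hιbij.2, Set.image_univ]
    exact hrange x

/-- Let `G` be a connected locally finite `(2d+1)`-regular simple graph.
If `G` is bipartite then `G` carries `d` permutations and a fixed-point-free involution
describing all neighborhoods; otherwise its canonical double cover does.  (Equivalently:
`G`, if bipartite, or `G ⊗ K₂`, otherwise, is isomorphic to a Schreier graph of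
`F_d ∗ (ℤ/2ℤ)`.) -/
theorem bipartite_or_doubleCover_freeProduct {V : Type*} (G : SimpleGraph V)
    [G.LocallyFinite] (d : ℕ) (hconn : G.Connected)
    (hreg : G.IsRegularOfDegree (2 * d + 1)) :
    (G.Colorable 2 → FreeProductStructure G d) ∧
    (¬ G.Colorable 2 → FreeProductStructure (doubleCover G) d) := by
  classical
  constructor
  · intro hcol
    obtain ⟨C⟩ := hcol
    refine buildStructure G d (fun x => Set.toFinite _) (fun x => ?_)
      (fun x => decide (C x = 0)) (fun x y hxy hh => ?_)
    · rw [Set.toFinite_toFinset, Set.toFinset_card, SimpleGraph.card_neighborSet_eq_degree]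
      exact hreg x
    · have hne := C.valid hxy
      have h2 : (C x = 0) ↔ (C y = 0) := decide_eq_decide.mp hh
      apply hne
      have ha := (C x).isLt
      have hb := (C y).isLt
      simp only [Fin.ext_iff, Fin.val_zero] at h2 ⊢
      omega
  · intro _
    have hset : ∀ x : V × Bool,
        (doubleCover G).neighborSet x = (fun w => (w, !x.2)) '' (G.neighborSet x.1) := by
      intro x
      ext ⟨w, bb⟩
      simp only [SimpleGraph.mem_neighborSet, Set.mem_image, doubleCover]
      constructor
      · rintro ⟨h1, h2⟩
        refine ⟨w, h1, ?_⟩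
        have : bb = !x.2 := by
          cases bb <;> cases hx2 : x.2 <;> simp_all
        rw [this]
      · rintro ⟨w', hw', heq⟩
        rw [Prod.mk.injEq] at heq
        obtain ⟨rfl, rfl⟩ := heq
        exact ⟨hw', by simp⟩
    have hfin2 : ∀ x : V × Bool, ((doubleCover G).neighborSet x).Finite := by
      intro x
      rw [hset x]
      exact ((G.neighborSet x.1).toFinite).image _
    refine buildStructure (doubleCover G) d hfin2 (fun x => ?_) (fun p => p.2)
      (fun x y hxy => (show G.Adj x.1 y.1 ∧ x.2 ≠ y.2 from hxy).2)
    have hT : (hfin2 x).toFinset = (G.neighborFinset x.1).image (fun w => (w, !x.2)) := by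
      ext p
      simp [Set.Finite.mem_toFinset, hset x, SimpleGraph.mem_neighborFinset]
    rw [hT, Finset.card_image_of_injective _ (fun a b h => by simpa using congrArg Prod.fst h)]
    exact hreg x.1
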